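/- The q-series identity E_4 - E_2^2 = -12 D E_2 holds, where D = q d/dq. -/

import Mathlib

open PowerSeries

/-- The operator `D = q d/dq` on formal power series. -/
noncomputable def Dq (f : PowerSeries ℚ) : PowerSeries ℚ :=
  PowerSeries.mk fun n => (n : ℚ) * PowerSeries.coeff n f

/-- The normalized Eisenstein series `E_2` as a formal `q`-series. -/
noncomputable def E2 : PowerSeries ℚ :=
  PowerSeries.mk fun n => if n = 0 then 1 else -24 * (ArithmeticFunction.sigma 1 n : ℚ)

/-- The normalized Eisenstein series `E_4` as a formal `q`-series. -/
noncomputable def E4 : PowerSeries ℚ :=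
  PowerSeries.mk fun n => if n = 0 then 1 else 240 * (ArithmeticFunction.sigma 3 n : ℚ)

/-- The normalized Eisenstein series `E_6` as a formal `q`-series. -/
noncomputable def E6 : PowerSeries ℚ :=
  PowerSeries.mk fun n => if n = 0 then 1 else -504 * (ArithmeticFunction.sigma 5 n : ℚ)

namespace Stmt11Aux

open Finset Nat

/-- Quadruples (a,b,c,d) of positive naturals with a*b+c*d = n. -/
def Q (n : ℕ) : Finset ((ℕ × ℕ) × ℕ × ℕ) :=
  ((range (n+1) ×ˢ range (n+1)) ×ˢ range (n+1) ×ˢ range (n+1)).filter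
    fun q => 0 < q.1.1 ∧ 0 < q.1.2 ∧ 0 < q.2.1 ∧ 0 < q.2.2 ∧ q.1.1*q.1.2 + q.2.1*q.2.2 = n

lemma mem_Q {n : ℕ} {q : (ℕ × ℕ) × ℕ × ℕ} :
    q ∈ Q n ↔ 0 < q.1.1 ∧ 0 < q.1.2 ∧ 0 < q.2.1 ∧ 0 < q.2.2 ∧ q.1.1*q.1.2 + q.2.1*q.2.2 = n := by
  simp only [Q, mem_filter, mem_product, mem_range]
  constructor
  · tauto
  · rintro ⟨ha, hb, hc, hd, h⟩
    have h1 : q.1.1 ≤ q.1.1 * q.1.2 := Nat.le_mul_of_pos_right _ hb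
    have h2 : q.1.2 ≤ q.1.1 * q.1.2 := Nat.le_mul_of_pos_left _ ha
    have h3 : q.2.1 ≤ q.2.1 * q.2.2 := Nat.le_mul_of_pos_right _ hd
    have h4 : q.2.2 ≤ q.2.1 * q.2.2 := Nat.le_mul_of_pos_left _ hc
    exact ⟨⟨⟨by omega, by omega⟩, by omega, by omega⟩, ha, hb, hc, hd, h⟩

/-- Trichotomy split of a sum. -/
lemma sum_split {α : Type*} (s : Finset α) (F : α → ℚ) (g h : α → ℕ) :
    ∑ x ∈ s, F x =
      ∑ x ∈ s.filter (fun x => h x < g x), F x +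
      ∑ x ∈ s.filter (fun x => g x < h x), F x +
      ∑ x ∈ s.filter (fun x => g x = h x), F x := by
  rw [← sum_filter_add_sum_filter_not s (fun x => h x < g x) F,
    ← sum_filter_add_sum_filter_not (s.filter (fun x => ¬ h x < g x)) (fun x => g x < h x) F,
    filter_filter, filter_filter]
  have e2 : s.filter (fun x => ¬ h x < g x ∧ g x < h x) = s.filter (fun x => g x < h x) := by
    apply filter_congr; intro x _; omega
  have e3 : s.filter (fun x => ¬ h x < g x ∧ ¬ g x < h x) = s.filter (fun x => g x = h x) := by
    apply filter_congr; intro x _; omega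
  rw [e2, e3, add_assoc]


/-- Swap symmetry of `Q n`. -/
lemma sum_swap_Q (n : ℕ) (p : (ℕ × ℕ) × ℕ × ℕ → Prop) [DecidablePred p]
    (F : (ℕ × ℕ) × ℕ × ℕ → ℚ) :
    ∑ q ∈ (Q n).filter p, F q = ∑ q ∈ (Q n).filter (fun q => p (q.2, q.1)), F (q.2, q.1) := by
  refine Finset.sum_bij' (fun q _ => (q.2, q.1)) (fun q _ => (q.2, q.1)) ?_ ?_ ?_ ?_ ?_
  · intro q hq
    simp only [mem_filter, mem_Q] at hq ⊢
    exact ⟨⟨hq.1.2.2.1, hq.1.2.2.2.1, hq.1.1, hq.1.2.1, by omega⟩, hq.2⟩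
  · intro q hq
    simp only [mem_filter, mem_Q] at hq ⊢
    exact ⟨⟨hq.1.2.2.1, hq.1.2.2.2.1, hq.1.1, hq.1.2.1, by omega⟩, hq.2⟩
  · intro q _; rfl
  · intro q _; rfl
  · intro q _; rfl

/-- The Liouville map `(a,b,c,d) ↦ (a-c, b, c, b+d)`:
bijection from `{c < a}` to `{b < d}`. -/
lemma sum_phi_Q (n : ℕ) (F : (ℕ × ℕ) × ℕ × ℕ → ℚ) :
    ∑ q ∈ (Q n).filter (fun q => q.2.1 < q.1.1),
        F ((q.1.1 - q.2.1, q.1.2), (q.2.1, q.1.2 + q.2.2))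
      = ∑ q ∈ (Q n).filter (fun q => q.1.2 < q.2.2), F q := by
  refine Finset.sum_bij' (fun q _ => ((q.1.1 - q.2.1, q.1.2), (q.2.1, q.1.2 + q.2.2)))
    (fun q _ => ((q.1.1 + q.2.1, q.1.2), (q.2.1, q.2.2 - q.1.2))) ?_ ?_ ?_ ?_ ?_
  · rintro ⟨⟨a, b⟩, c, d⟩ hq
    simp only [mem_filter, mem_Q] at hq ⊢
    obtain ⟨⟨ha, hb, hc, hd, h⟩, hca⟩ := hq
    obtain ⟨e, rfl⟩ : ∃ e, a = c + e := ⟨a - c, by omega⟩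
    simp only [Nat.add_sub_cancel_left] at *
    refine ⟨⟨by omega, hb, hc, by omega, ?_⟩, by omega⟩
    ring_nf at h ⊢
    linarith
  · rintro ⟨⟨a, b⟩, c, d⟩ hq
    simp only [mem_filter, mem_Q] at hq ⊢
    obtain ⟨⟨ha, hb, hc, hd, h⟩, hbd⟩ := hq
    obtain ⟨e, rfl⟩ : ∃ e, d = b + e := ⟨d - b, by omega⟩
    simp only [Nat.add_sub_cancel_left] at *
    refine ⟨⟨by omega, hb, hc, by omega, ?_⟩, by omega⟩
    ring_nf at h ⊢
    linarith
  · rintro ⟨⟨a, b⟩, c, d⟩ hq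
    simp only [mem_filter, mem_Q] at hq
    have h1 : a - c + c = a := by omega
    have h2 : b + d - b = d := by omega
    simp [h1, h2]
  · rintro ⟨⟨a, b⟩, c, d⟩ hq
    simp only [mem_filter, mem_Q] at hq
    have h1 : a + c - c = a := by omega
    have h2 : b + (d - b) = d := by omega
    simp [h1, h2]
  · intro q _; rfl


/-- Master identity from the Liouville bijection. -/
lemma master (n : ℕ) (f : ℕ → ℕ → ℚ) :
    (∑ q ∈ (Q n).filter (fun q => q.1.1 = q.2.1), f q.1.2 q.2.2)
      - (∑ q ∈ (Q n).filter (fun q => q.2.2 = q.1.2), f q.1.2 q.2.2)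
    = ∑ q ∈ (Q n).filter (fun q => q.2.1 < q.1.1),
        (f q.1.2 (q.1.2 + q.2.2) + f (q.1.2 + q.2.2) q.1.2
          - f q.1.2 q.2.2 - f q.2.2 q.1.2) := by
  have s1 := sum_split (Q n) (fun q => f q.1.2 q.2.2) (fun q => q.1.1) (fun q => q.2.1)
  have s2 := sum_split (Q n) (fun q => f q.1.2 q.2.2) (fun q => q.2.2) (fun q => q.1.2)
  have w1 := sum_swap_Q n (fun q => q.1.1 < q.2.1) (fun q => f q.1.2 q.2.2)
  have w2 := sum_swap_Q n (fun q => q.2.2 < q.1.2) (fun q => f q.1.2 q.2.2)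
  have p1 := sum_phi_Q n (fun q => f q.1.2 q.2.2 + f q.2.2 q.1.2)
  simp only at s1 s2 w1 w2 p1
  rw [sum_add_distrib, sum_add_distrib] at p1
  have e1 : ∀ (g h : (ℕ × ℕ) × ℕ × ℕ → ℚ) (t : Finset ((ℕ × ℕ) × ℕ × ℕ)),
      ∑ q ∈ t, (g q - h q) = ∑ q ∈ t, g q - ∑ q ∈ t, h q := fun g h t => sum_sub_distrib g h
  rw [show (fun (q : (ℕ × ℕ) × ℕ × ℕ) =>
        f q.1.2 (q.1.2 + q.2.2) + f (q.1.2 + q.2.2) q.1.2 - f q.1.2 q.2.2 - f q.2.2 q.1.2)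
      = fun q => ((f q.1.2 (q.1.2 + q.2.2) + f (q.1.2 + q.2.2) q.1.2) - f q.1.2 q.2.2)
          - f q.2.2 q.1.2 from rfl,
    e1, e1, sum_add_distrib]
  linarith


lemma sum_range_cast (e : ℕ) : ∑ k ∈ range e, (k : ℚ) = e * (e - 1) / 2 := by
  induction e with
  | zero => simp
  | succ m ih => rw [sum_range_succ, ih]; push_cast; ring

lemma sum_range_cast_sq (e : ℕ) :
    ∑ k ∈ range e, (k : ℚ) ^ 2 = e * (e - 1) * (2 * e - 1) / 6 := by
  induction e with
  | zero => simp
  | succ m ih => rw [sum_range_succ, ih]; push_cast; ring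

lemma range_eq_insert_Ioo {e : ℕ} (he : 0 < e) : range e = insert 0 (Ioo 0 e) := by
  ext x; simp only [mem_range, mem_insert, mem_Ioo]; omega

/-- Reindex a filtered antidiagonal sum. -/
lemma sum_antidiagonal_pos (e : ℕ) (f : ℕ → ℕ → ℚ) :
    ∑ r ∈ (antidiagonal e).filter (fun r => 0 < r.1 ∧ 0 < r.2), f r.1 r.2
      = ∑ k ∈ Ioo 0 e, f k (e - k) := by
  have himg : (antidiagonal e).filter (fun r => 0 < r.1 ∧ 0 < r.2)
      = (Ioo 0 e).image (fun k => (k, e - k)) := by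
    ext ⟨x, y⟩
    simp only [mem_filter, Finset.HasAntidiagonal.mem_antidiagonal, mem_image, mem_Ioo, Prod.mk.injEq]
    constructor
    · rintro ⟨hxy, hx, hy⟩; exact ⟨x, ⟨hx, by omega⟩, rfl, by omega⟩
    · rintro ⟨k, hk, rfl, rfl⟩; omega
  rw [himg, sum_image]
  intro a _ b _ h
  exact (Prod.mk.injEq _ _ _ _ ▸ h).1

lemma inner_f1 (e : ℕ) :
    ∑ k ∈ Ioo 0 e, (k : ℚ) * ((e - k : ℕ) : ℚ) = ((e : ℚ) ^ 3 - e) / 6 := by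
  rcases Nat.eq_zero_or_pos e with rfl | he
  · simp
  have h0 : ∑ k ∈ range e, (k : ℚ) * ((e - k : ℕ) : ℚ) =
      ∑ k ∈ Ioo 0 e, (k : ℚ) * ((e - k : ℕ) : ℚ) := by
    rw [range_eq_insert_Ioo he, sum_insert (by simp)]; simp
  rw [← h0]
  have h1 : ∑ k ∈ range e, (k : ℚ) * ((e - k : ℕ) : ℚ)
      = ∑ k ∈ range e, ((e : ℚ) * k - (k : ℚ) ^ 2) := by
    apply sum_congr rfl
    intro k hk
    rw [Nat.cast_sub (le_of_lt (mem_range.1 hk))]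
    ring
  rw [h1, sum_sub_distrib, ← mul_sum, sum_range_cast, sum_range_cast_sq]
  ring

lemma inner_f2 (e : ℕ) :
    ∑ k ∈ Ioo 0 e, (2 * ((e - k : ℕ) : ℚ) ^ 2 - (k : ℚ) * ((e - k : ℕ) : ℚ))
      = (e : ℚ) * ((e : ℚ) - 1) ^ 2 / 2 := by
  rcases Nat.eq_zero_or_pos e with rfl | he
  · simp
  have h0 : ∑ k ∈ range e, (2 * ((e - k : ℕ) : ℚ) ^ 2 - (k : ℚ) * ((e - k : ℕ) : ℚ)) =
      2 * (e : ℚ) ^ 2 + ∑ k ∈ Ioo 0 e, (2 * ((e - k : ℕ) : ℚ) ^ 2 - (k : ℚ) * ((e - k : ℕ) : ℚ)) := by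
    rw [range_eq_insert_Ioo he, sum_insert (by simp)]; simp
  have h1 : ∑ k ∈ range e, (2 * ((e - k : ℕ) : ℚ) ^ 2 - (k : ℚ) * ((e - k : ℕ) : ℚ))
      = ∑ k ∈ range e, (2 * ((e : ℚ) - k) ^ 2 - ((e : ℚ) * k - (k : ℚ) ^ 2)) := by
    apply sum_congr rfl
    intro k hk
    rw [Nat.cast_sub (le_of_lt (mem_range.1 hk))]
    ring
  have h2 : ∑ k ∈ range e, (2 * ((e : ℚ) - k) ^ 2 - ((e : ℚ) * k - (k : ℚ) ^ 2))
      = ∑ k ∈ range e, ((2 * (e : ℚ) ^ 2) - (5 * e) * (k : ℚ) + 3 * (k : ℚ) ^ 2) := by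
    apply sum_congr rfl; intro k _; ring
  have h3 : ∑ k ∈ range e, ((2 * (e : ℚ) ^ 2) - (5 * e) * (k : ℚ) + 3 * (k : ℚ) ^ 2)
      = e * (2 * (e : ℚ) ^ 2) - (5 * e) * (e * ((e : ℚ) - 1) / 2)
        + 3 * (e * ((e : ℚ) - 1) * (2 * e - 1) / 6) := by
    have hA : ∑ _k ∈ range e, (2 * (e : ℚ) ^ 2) = e * (2 * (e : ℚ) ^ 2) := by
      rw [sum_const, card_range, nsmul_eq_mul]
    have hB : ∑ k ∈ range e, (5 * (e : ℚ)) * (k : ℚ) = (5 * (e : ℚ)) * (e * ((e : ℚ) - 1) / 2) := by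
      rw [← mul_sum, sum_range_cast]
    have hC : ∑ k ∈ range e, 3 * (k : ℚ) ^ 2 = 3 * (e * ((e : ℚ) - 1) * (2 * (e : ℚ) - 1) / 6) := by
      rw [← mul_sum, sum_range_cast_sq]
    rw [sum_add_distrib, sum_sub_distrib, hA, hB, hC]
  have := h0
  rw [h1, h2, h3] at this
  linarith


lemma ab_cd_ne_zero {a b c d : ℕ} (ha : 0 < a) (hb : 0 < b) : a * b + c * d ≠ 0 :=
  Nat.ne_of_gt (Nat.lt_of_lt_of_le (Nat.mul_pos ha hb) (Nat.le_add_right _ _))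

/-- Diagonal `a = c`: reindex by divisor pairs. -/
lemma diag_ac (n : ℕ) (f : ℕ → ℕ → ℚ) :
    ∑ q ∈ (Q n).filter (fun q => q.1.1 = q.2.1), f q.1.2 q.2.2
      = ∑ p ∈ n.divisorsAntidiagonal,
          ∑ r ∈ (antidiagonal p.2).filter (fun r => 0 < r.1 ∧ 0 < r.2), f r.1 r.2 := by
  rw [Finset.sum_sigma' n.divisorsAntidiagonal
    (fun p => (antidiagonal p.2).filter (fun r => 0 < r.1 ∧ 0 < r.2))
    (fun _ r => f r.1 r.2)]
  refine Finset.sum_bij' (fun q _ => ⟨(q.1.1, q.1.2 + q.2.2), (q.1.2, q.2.2)⟩)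
    (fun x _ => ((x.1.1, x.2.1), (x.1.1, x.2.2))) ?_ ?_ ?_ ?_ ?_
  · rintro ⟨⟨a, b⟩, c, d⟩ hq
    simp only [mem_filter, mem_Q] at hq
    obtain ⟨⟨ha, hb, hc, hd, h⟩, hac⟩ := hq
    subst hac
    refine Finset.mem_sigma.mpr ⟨Nat.mem_divisorsAntidiagonal.mpr ⟨?_, ?_⟩,
      mem_filter.mpr ⟨Finset.HasAntidiagonal.mem_antidiagonal.mpr rfl, hb, hd⟩⟩
    · dsimp; rw [Nat.mul_add]; exact h
    · exact h ▸ ab_cd_ne_zero ha hb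
  · rintro ⟨⟨a, e⟩, b, d⟩ hx
    obtain ⟨hp, hr⟩ := Finset.mem_sigma.mp hx
    obtain ⟨hae, hn0⟩ := Nat.mem_divisorsAntidiagonal.mp hp
    obtain ⟨hbd, hb, hd⟩ := mem_filter.mp hr
    have hbd' : b + d = e := Finset.HasAntidiagonal.mem_antidiagonal.mp hbd
    have ha : 0 < a := by
      rcases Nat.eq_zero_or_pos a with rfl | h
      · exfalso; apply hn0; rw [← hae]; simp
      · exact h
    refine mem_filter.mpr ⟨mem_Q.mpr ⟨ha, hb, ha, hd, ?_⟩, rfl⟩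
    dsimp at hae ⊢
    rw [← Nat.mul_add, hbd', hae]
  · rintro ⟨⟨a, b⟩, c, d⟩ hq
    simp only [mem_filter, mem_Q] at hq
    have : a = c := hq.2
    simp [this]
  · rintro ⟨⟨a, e⟩, b, d⟩ hx
    obtain ⟨hp, hr⟩ := Finset.mem_sigma.mp hx
    have hbd' : b + d = e := Finset.HasAntidiagonal.mem_antidiagonal.mp (mem_filter.mp hr).1
    simp [hbd']
  · intro q _; rfl

/-- Diagonal `b = d`: reindex by divisor pairs. -/
lemma diag_bd (n : ℕ) (f : ℕ → ℕ → ℚ) :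
    ∑ q ∈ (Q n).filter (fun q => q.2.2 = q.1.2), f q.1.2 q.2.2
      = ∑ p ∈ n.divisorsAntidiagonal, ((p.1 : ℚ) - 1) * f p.2 p.2 := by
  have step : ∑ q ∈ (Q n).filter (fun q => q.2.2 = q.1.2), f q.1.2 q.2.2
      = ∑ p ∈ n.divisorsAntidiagonal,
          ∑ _r ∈ (antidiagonal p.1).filter (fun r => 0 < r.1 ∧ 0 < r.2), f p.2 p.2 := by
    rw [Finset.sum_sigma' n.divisorsAntidiagonal
      (fun p => (antidiagonal p.1).filter (fun r => 0 < r.1 ∧ 0 < r.2))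
      (fun p _ => f p.2 p.2)]
    refine Finset.sum_bij' (fun q _ => ⟨(q.1.1 + q.2.1, q.1.2), (q.1.1, q.2.1)⟩)
      (fun x _ => ((x.2.1, x.1.2), (x.2.2, x.1.2))) ?_ ?_ ?_ ?_ ?_
    · rintro ⟨⟨a, b⟩, c, d⟩ hq
      simp only [mem_filter, mem_Q] at hq
      obtain ⟨⟨ha, hb, hc, hd, h⟩, hdb⟩ := hq
      subst hdb
      refine Finset.mem_sigma.mpr ⟨Nat.mem_divisorsAntidiagonal.mpr ⟨?_, ?_⟩,
        mem_filter.mpr ⟨Finset.HasAntidiagonal.mem_antidiagonal.mpr rfl, ha, hc⟩⟩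
      · dsimp; rw [Nat.add_mul]; exact h
      · exact h ▸ ab_cd_ne_zero ha hb
    · rintro ⟨⟨e, b⟩, a, c⟩ hx
      obtain ⟨hp, hr⟩ := Finset.mem_sigma.mp hx
      obtain ⟨heb, hn0⟩ := Nat.mem_divisorsAntidiagonal.mp hp
      obtain ⟨hac, ha, hc⟩ := mem_filter.mp hr
      have hac' : a + c = e := Finset.HasAntidiagonal.mem_antidiagonal.mp hac
      have hb : 0 < b := by
        rcases Nat.eq_zero_or_pos b with rfl | h
        · exfalso; apply hn0; rw [← heb]; simp
        · exact h
      refine mem_filter.mpr ⟨mem_Q.mpr ⟨ha, hb, hc, hb, ?_⟩, rfl⟩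
      dsimp at heb ⊢
      rw [← Nat.add_mul, hac', heb]
    · rintro ⟨⟨a, b⟩, c, d⟩ hq
      simp only [mem_filter, mem_Q] at hq
      have : d = b := hq.2
      simp [this]
    · rintro ⟨⟨e, b⟩, a, c⟩ hx
      obtain ⟨hp, hr⟩ := Finset.mem_sigma.mp hx
      have hac' : a + c = e := Finset.HasAntidiagonal.mem_antidiagonal.mp (mem_filter.mp hr).1
      simp [hac']
    · rintro ⟨⟨a, b⟩, c, d⟩ hq
      simp only [mem_filter, mem_Q] at hq
      have : d = b := hq.2
      subst this
      rfl
  rw [step]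
  apply sum_congr rfl
  intro p hp
  rw [sum_antidiagonal_pos p.1 (fun _ _ => f p.2 p.2), sum_const, Nat.card_Ioo,
    nsmul_eq_mul]
  congr 1
  have hp1 : 0 < p.1 := by
    rcases Nat.mem_divisorsAntidiagonal.1 hp with ⟨h1, h2⟩
    rcases Nat.eq_zero_or_pos p.1 with h | h
    · rw [h] at h1; simp at h1; omega
    · exact h
  rw [Nat.sub_zero, Nat.cast_sub hp1]
  push_cast
  ring

/-- Besge's identity, in divisor-sum form. -/
lemma besge (n : ℕ) :
    12 * ∑ q ∈ Q n, (q.1.2 : ℚ) * q.2.2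
      = 5 * (∑ e ∈ n.divisors, (e : ℚ) ^ 3) + (∑ e ∈ n.divisors, (e : ℚ))
        - 6 * (n : ℚ) * ∑ e ∈ n.divisors, (e : ℚ) := by
  set P3 := ∑ e ∈ n.divisors, (e : ℚ) ^ 3 with hP3
  set P2 := ∑ e ∈ n.divisors, (e : ℚ) ^ 2 with hP2
  set P1 := ∑ e ∈ n.divisors, (e : ℚ) with hP1
  have hsplit : ∀ (c3 c2 c1 : ℚ), ∑ e ∈ n.divisors, (c3 * (e : ℚ) ^ 3 + c2 * (e : ℚ) ^ 2 + c1 * (e : ℚ))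
      = c3 * P3 + c2 * P2 + c1 * P1 := by
    intro c3 c2 c1
    rw [sum_add_distrib, sum_add_distrib, ← mul_sum, ← mul_sum, ← mul_sum]
  -- split the full sum by comparing a and c
  have s1 := sum_split (Q n) (fun q => (q.1.2 : ℚ) * q.2.2) (fun q => q.1.1) (fun q => q.2.1)
  have w1 := sum_swap_Q n (fun q => q.1.1 < q.2.1) (fun q => (q.1.2 : ℚ) * q.2.2)
  simp only at s1 w1
  have w1' : ∑ q ∈ (Q n).filter (fun q => q.2.1 < q.1.1), (q.2.2 : ℚ) * q.1.2
      = ∑ q ∈ (Q n).filter (fun q => q.2.1 < q.1.1), (q.1.2 : ℚ) * q.2.2 :=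
    sum_congr rfl fun q _ => mul_comm _ _
  -- the master identity applied to f₂ b d = 2 d² - b d
  have m2 := master n (fun b d => 2 * (d : ℚ) ^ 2 - (b : ℚ) * d)
  have m2' : ∑ q ∈ (Q n).filter (fun q => q.2.1 < q.1.1),
      (2 * ((q.1.2 + q.2.2 : ℕ) : ℚ) ^ 2 - (q.1.2 : ℚ) * ((q.1.2 + q.2.2 : ℕ) : ℚ)
        + (2 * (q.1.2 : ℚ) ^ 2 - ((q.1.2 + q.2.2 : ℕ) : ℚ) * q.1.2)
        - (2 * (q.2.2 : ℚ) ^ 2 - (q.1.2 : ℚ) * q.2.2)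
        - (2 * (q.1.2 : ℚ) ^ 2 - (q.2.2 : ℚ) * q.1.2))
      = 4 * ∑ q ∈ (Q n).filter (fun q => q.2.1 < q.1.1), (q.1.2 : ℚ) * q.2.2 := by
    rw [mul_sum]
    apply sum_congr rfl
    intro q _
    push_cast
    ring
  rw [m2'] at m2
  -- evaluate diagonal sums
  have dac1 : ∑ q ∈ (Q n).filter (fun q => q.1.1 = q.2.1), (q.1.2 : ℚ) * q.2.2
      = (1/6) * P3 + 0 * P2 + (-(1/6)) * P1 := by
    rw [diag_ac n (fun b d => (b : ℚ) * d)]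
    have : ∀ p ∈ n.divisorsAntidiagonal,
        ∑ r ∈ (antidiagonal p.2).filter (fun r => 0 < r.1 ∧ 0 < r.2), (r.1 : ℚ) * r.2
          = ((p.2 : ℚ) ^ 3 - p.2) / 6 := by
      intro p _
      rw [sum_antidiagonal_pos p.2 (fun b d => (b : ℚ) * d)]
      exact inner_f1 p.2
    rw [sum_congr rfl this, Nat.sum_divisorsAntidiagonal' (fun _ e => (((e : ℕ) : ℚ) ^ 3 - (e : ℕ)) / 6), ← hsplit]
    apply sum_congr rfl
    intro e _
    ring
  have dac2 : ∑ q ∈ (Q n).filter (fun q => q.1.1 = q.2.1),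
        (2 * (q.2.2 : ℚ) ^ 2 - (q.1.2 : ℚ) * q.2.2)
      = (1/2) * P3 + (-1) * P2 + (1/2) * P1 := by
    rw [diag_ac n (fun b d => 2 * (d : ℚ) ^ 2 - (b : ℚ) * d)]
    have : ∀ p ∈ n.divisorsAntidiagonal,
        ∑ r ∈ (antidiagonal p.2).filter (fun r => 0 < r.1 ∧ 0 < r.2),
            (2 * (r.2 : ℚ) ^ 2 - (r.1 : ℚ) * r.2)
          = (p.2 : ℚ) * ((p.2 : ℚ) - 1) ^ 2 / 2 := by
      intro p _
      rw [sum_antidiagonal_pos p.2 (fun b d => 2 * (d : ℚ) ^ 2 - (b : ℚ) * d)]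
      exact inner_f2 p.2
    rw [sum_congr rfl this, Nat.sum_divisorsAntidiagonal' (fun _ e => ((e : ℕ) : ℚ) * (((e : ℕ) : ℚ) - 1) ^ 2 / 2), ← hsplit]
    apply sum_congr rfl
    intro e _
    ring
  have dbd2 : ∑ q ∈ (Q n).filter (fun q => q.2.2 = q.1.2),
        (2 * (q.2.2 : ℚ) ^ 2 - (q.1.2 : ℚ) * q.2.2)
      = (n : ℚ) * P1 - P2 := by
    rw [diag_bd n (fun b d => 2 * (d : ℚ) ^ 2 - (b : ℚ) * d)]
    rw [Nat.sum_divisorsAntidiagonal' (fun e b => (((e : ℕ) : ℚ) - 1) * (2 * ((b : ℕ) : ℚ) ^ 2 - ((b : ℕ) : ℚ) * (b : ℕ)))]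
    have : ∀ b ∈ n.divisors,
        (((n / b : ℕ) : ℚ) - 1) * (2 * ((b : ℕ) : ℚ) ^ 2 - ((b : ℕ) : ℚ) * (b : ℕ))
          = (n : ℚ) * (b : ℚ) - (b : ℚ) ^ 2 := by
      intro b hb
      have hdvd : b ∣ n := (Nat.mem_divisors.mp hb).1
      have : ((n / b : ℕ) : ℚ) * (b : ℚ) = (n : ℚ) := by
        rw [← Nat.cast_mul, Nat.div_mul_cancel hdvd]
      nlinarith [this]
    rw [sum_congr rfl this]
    rw [sum_sub_distrib, ← mul_sum, hP1, hP2]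
  -- assemble
  rw [dac1] at s1
  rw [dac2, dbd2] at m2
  linarith [s1, w1, w1', m2]

/-- The convolution sum equals the quadruple sum. -/
lemma conv_eq (n : ℕ) :
    ∑ p ∈ antidiagonal n,
        (∑ x ∈ p.1.divisorsAntidiagonal, (x.2 : ℚ)) * (∑ y ∈ p.2.divisorsAntidiagonal, (y.2 : ℚ))
      = ∑ q ∈ Q n, (q.1.2 : ℚ) * q.2.2 := by
  have h1 : ∀ p : ℕ × ℕ,
      (∑ x ∈ p.1.divisorsAntidiagonal, (x.2 : ℚ)) * (∑ y ∈ p.2.divisorsAntidiagonal, (y.2 : ℚ))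
        = ∑ z ∈ p.1.divisorsAntidiagonal ×ˢ p.2.divisorsAntidiagonal, (z.1.2 : ℚ) * z.2.2 := by
    intro p
    rw [Finset.sum_mul_sum, Finset.sum_product]
  rw [sum_congr rfl (fun p _ => h1 p),
    Finset.sum_sigma' (antidiagonal n)
      (fun p => p.1.divisorsAntidiagonal ×ˢ p.2.divisorsAntidiagonal)
      (fun _ z => (z.1.2 : ℚ) * z.2.2)]
  refine Finset.sum_bij' (fun x _ => x.2) (fun q _ => ⟨(q.1.1 * q.1.2, q.2.1 * q.2.2), q⟩)
    ?_ ?_ ?_ ?_ ?_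
  · rintro ⟨⟨m, k⟩, ⟨a, b⟩, c, d⟩ hx
    obtain ⟨hp, hz⟩ := Finset.mem_sigma.mp hx
    obtain ⟨hab, hcd⟩ := Finset.mem_product.mp hz
    obtain ⟨hab1, hab2⟩ := Nat.mem_divisorsAntidiagonal.mp hab
    obtain ⟨hcd1, hcd2⟩ := Nat.mem_divisorsAntidiagonal.mp hcd
    have hmk : m + k = n := Finset.HasAntidiagonal.mem_antidiagonal.mp hp
    dsimp at hab1 hcd1 ⊢
    refine mem_Q.mpr ⟨?_, ?_, ?_, ?_, by rw [hab1, hcd1, hmk]⟩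
    · rcases Nat.eq_zero_or_pos a with rfl | h
      · exfalso; apply hab2; rw [← hab1]; simp
      · exact h
    · rcases Nat.eq_zero_or_pos b with rfl | h
      · exfalso; apply hab2; rw [← hab1]; simp
      · exact h
    · rcases Nat.eq_zero_or_pos c with rfl | h
      · exfalso; apply hcd2; rw [← hcd1]; simp
      · exact h
    · rcases Nat.eq_zero_or_pos d with rfl | h
      · exfalso; apply hcd2; rw [← hcd1]; simp
      · exact h
  · rintro ⟨⟨a, b⟩, c, d⟩ hq
    obtain ⟨ha, hb, hc, hd, h⟩ := mem_Q.mp hq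
    refine Finset.mem_sigma.mpr ⟨Finset.HasAntidiagonal.mem_antidiagonal.mpr h, Finset.mem_product.mpr ⟨?_, ?_⟩⟩
    · exact Nat.mem_divisorsAntidiagonal.mpr ⟨rfl, Nat.ne_of_gt (Nat.mul_pos ha hb)⟩
    · exact Nat.mem_divisorsAntidiagonal.mpr ⟨rfl, Nat.ne_of_gt (Nat.mul_pos hc hd)⟩
  · rintro ⟨⟨m, k⟩, ⟨a, b⟩, c, d⟩ hx
    obtain ⟨hp, hz⟩ := Finset.mem_sigma.mp hx
    obtain ⟨hab, hcd⟩ := Finset.mem_product.mp hz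
    have hab1 : a * b = m := (Nat.mem_divisorsAntidiagonal.mp hab).1
    have hcd1 : c * d = k := (Nat.mem_divisorsAntidiagonal.mp hcd).1
    dsimp
    rw [hab1, hcd1]
  · rintro ⟨⟨a, b⟩, c, d⟩ _
    rfl
  · intro x _
    rfl

/-- Coefficient of `E2` as a sum. -/
lemma coeff_E2 (k : ℕ) :
    PowerSeries.coeff k E2
      = (if k = 0 then (1 : ℚ) else 0) - 24 * ∑ x ∈ k.divisorsAntidiagonal, (x.2 : ℚ) := by
  rw [E2, PowerSeries.coeff_mk]
  rcases Nat.eq_zero_or_pos k with rfl | hk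
  · simp
  · have hk0 : k ≠ 0 := by omega
    rw [if_neg hk0, if_neg hk0]
    have : ((ArithmeticFunction.sigma 1 k : ℕ) : ℚ) = ∑ x ∈ k.divisorsAntidiagonal, (x.2 : ℚ) := by
      rw [ArithmeticFunction.sigma_apply, Nat.cast_sum,
        Nat.sum_divisorsAntidiagonal' (fun _ d => ((d : ℕ) : ℚ))]
      apply sum_congr rfl
      intro d _
      rw [pow_one]
    rw [this]
    ring

lemma sigma_cast (k n : ℕ) :
    ((ArithmeticFunction.sigma k n : ℕ) : ℚ) = ∑ e ∈ n.divisors, (e : ℚ) ^ k := by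
  rw [ArithmeticFunction.sigma_apply, Nat.cast_sum]
  simp

end Stmt11Aux

open Stmt11Aux Finset in
theorem stmt11 : E4 - E2 ^ 2 = -12 * Dq E2 := by
  ext n
  rw [map_sub, pow_two, PowerSeries.coeff_mul,
    show (-12 : PowerSeries ℚ) = PowerSeries.C (-12 : ℚ) by rw [map_neg, map_ofNat],
    PowerSeries.coeff_C_mul]
  have hDq : PowerSeries.coeff n (Dq E2) = n * PowerSeries.coeff n E2 := by
    rw [Dq, PowerSeries.coeff_mk]
  rw [hDq]
  rcases Nat.eq_zero_or_pos n with rfl | hn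
  · simp [E4, E2, PowerSeries.coeff_mk]
  have hn0 : n ≠ 0 := by omega
  have hE4 : PowerSeries.coeff n E4 = 240 * ∑ e ∈ n.divisors, (e : ℚ) ^ 3 := by
    rw [E4, PowerSeries.coeff_mk, if_neg hn0, sigma_cast]
  have hE2n : PowerSeries.coeff n E2 = -24 * ∑ e ∈ n.divisors, (e : ℚ) := by
    rw [E2, PowerSeries.coeff_mk, if_neg hn0]
    congr 1
    rw [sigma_cast]
    apply sum_congr rfl
    intro e _
    rw [pow_one]
  -- expand the convolution sum
  set s : ℕ → ℚ := fun k => ∑ x ∈ k.divisorsAntidiagonal, (x.2 : ℚ) with hs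
  have hT : ∑ p ∈ antidiagonal n, PowerSeries.coeff p.1 E2 * PowerSeries.coeff p.2 E2
      = 576 * (∑ p ∈ antidiagonal n, s p.1 * s p.2) - 48 * s n := by
    have expand : ∀ p ∈ antidiagonal n,
        PowerSeries.coeff p.1 E2 * PowerSeries.coeff p.2 E2
          = ((if p.1 = 0 then (1:ℚ) else 0) * (if p.2 = 0 then (1:ℚ) else 0))
            - 24 * ((if p.1 = 0 then (1:ℚ) else 0) * s p.2)
            - 24 * (s p.1 * (if p.2 = 0 then (1:ℚ) else 0))
            + 576 * (s p.1 * s p.2) := by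
      intro p _
      rw [coeff_E2, coeff_E2]
      ring
    rw [sum_congr rfl expand]
    rw [sum_add_distrib, sum_sub_distrib, sum_sub_distrib, ← mul_sum, ← mul_sum, ← mul_sum]
    have z1 : ∑ p ∈ antidiagonal n,
        ((if p.1 = 0 then (1:ℚ) else 0) * (if p.2 = 0 then (1:ℚ) else 0)) = 0 := by
      apply Finset.sum_eq_zero
      intro p hp
      have := Finset.HasAntidiagonal.mem_antidiagonal.mp hp
      rcases Nat.eq_zero_or_pos p.1 with h | h
      · rw [if_neg (by omega : ¬ p.2 = 0), mul_zero]
      · rw [if_neg (by omega : ¬ p.1 = 0), zero_mul]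
    have z2 : ∑ p ∈ antidiagonal n, ((if p.1 = 0 then (1:ℚ) else 0) * s p.2) = s n := by
      rw [Finset.sum_eq_single_of_mem (0, n) (Finset.HasAntidiagonal.mem_antidiagonal.mpr (by omega))]
      · simp
      · intro p hp hne
        have := Finset.HasAntidiagonal.mem_antidiagonal.mp hp
        rw [if_neg, zero_mul]
        intro h0
        apply hne
        have : p.2 = n := by omega
        exact Prod.ext h0 this
    have z3 : ∑ p ∈ antidiagonal n, (s p.1 * (if p.2 = 0 then (1:ℚ) else 0)) = s n := by
      rw [Finset.sum_eq_single_of_mem (n, 0) (Finset.HasAntidiagonal.mem_antidiagonal.mpr (by omega))]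
      · simp
      · intro p hp hne
        have := Finset.HasAntidiagonal.mem_antidiagonal.mp hp
        rw [if_neg, mul_zero]
        intro h0
        apply hne
        have : p.1 = n := by omega
        exact Prod.ext this h0
    rw [z1, z2, z3]
    ring
  have hsn : s n = ∑ e ∈ n.divisors, (e : ℚ) :=
    Nat.sum_divisorsAntidiagonal' fun _ d => ((d : ℕ) : ℚ)
  have hbesge := besge n
  rw [← conv_eq n] at hbesge
  rw [hE4, hE2n, hT, hsn]
  set P1 := ∑ e ∈ n.divisors, (e : ℚ)
  set P3 := ∑ e ∈ n.divisors, (e : ℚ) ^ 3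
  set S := ∑ p ∈ antidiagonal n, s p.1 * s p.2 with hS
  linarith [hbesge]
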